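/- In a causal category, if A causally precedes B or A and B are causally unrelated (i.e., in either case the hom-set C(B,A) is disconnected), then any isomorphism f : A ≅ B forces A ≅ I and B ≅ I. -/
import Mathlib

open CategoryTheory MonoidalCategory

/-- In a causal category, if `C(B,A)` is disconnected (i.e. `A` causally precedes `B` or they
are causally unrelated), then any isomorphism `A ≅ B` forces `A ≅ I` and `B ≅ I`. -/
theorem stmt10 {M : Type*} [Category M] [MonoidalCategory M] [SymmetricCategory M]
    (top : ∀ A : M, A ⟶ 𝟙_ M) (huniq : ∀ (A : M) (f : A ⟶ 𝟙_ M), f = top A)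
    (hstate : ∀ A : M, Nonempty (𝟙_ M ⟶ A))
    {A B : M} (hdisc : ∀ g : B ⟶ A, ∃ ψ : 𝟙_ M ⟶ A, g = top B ≫ ψ)
    (f : A ≅ B) :
    Nonempty (A ≅ 𝟙_ M) ∧ Nonempty (B ≅ 𝟙_ M) := by
  obtain ⟨ψ, hψ⟩ := hdisc f.inv
  have h1 : top A ≫ ψ = 𝟙 A := by
    have : f.hom ≫ top B = top A := (huniq A _).symm ▸ rfl
    calc top A ≫ ψ = (f.hom ≫ top B) ≫ ψ := by rw [huniq A (f.hom ≫ top B)]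
    _ = f.hom ≫ f.inv := by rw [Category.assoc, ← hψ]
    _ = 𝟙 A := f.hom_inv_id
  have h2 : ψ ≫ top A = 𝟙 (𝟙_ M) := by
    rw [huniq _ (ψ ≫ top A), ← huniq _ (𝟙 _)]
  have iA : A ≅ 𝟙_ M := ⟨top A, ψ, h1, h2⟩
  exact ⟨⟨iA⟩, ⟨f.symm.trans iA⟩⟩
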